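/- arXiv:2209.05703 — 4 statements merged into one kernel-verified Lean document; each statement's English description precedes it below -/
import Mathlib

section
/- Let Π be a finite set of joint policies for N players, and suppose the game has the subjective ε-satisficing paths property within Π: from every joint policy π ∈ Π there is a finite sequence of joint policies in Π, each obtained from the previous by changing only the policies of players not subjectively ε-best-responding, ending at a subjective ε-equilibrium. Suppose each player, when not subjectively ε-best-responding, switches with probability e^i ∈ (0,1) to a uniformly random policy in Π^i (independently across players), and otherwise keeps its policy; players who are subjectively ε-best-responding never change policy. Then the induced Markov chain on Π converges: P(π_k is a subjective ε-equilibrium) → 1 as k → ∞. -/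
open Filter

/-- One-step transition kernel of the satisficing policy-update dynamics: each player who is
subjectively ε-best-responding keeps its policy; each other player independently keeps its
policy with probability `1 − e i` and otherwise switches to a uniformly random policy. -/
noncomputable def satisficingKernel {ι : Type} [Fintype ι] [DecidableEq ι] {P : ι → Type}
    [∀ i, Fintype (P i)] [∀ i, DecidableEq (P i)]
    (BR : ∀ i : ι, (∀ j, P j) → Prop) [∀ i π, Decidable (BR i π)]
    (e : ι → ℝ) (π π' : ∀ j, P j) : ℝ :=
  ∏ i : ι,
    if BR i π then (if π' i = π i then (1 : ℝ) else 0)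
    else ((1 - e i) * (if π' i = π i then (1 : ℝ) else 0)
          + e i * (1 / (Fintype.card (P i) : ℝ)))

/-- `k`-step transition probabilities. -/
noncomputable def kernelPow {P : Type} [Fintype P] [DecidableEq P] (K : P → P → ℝ) : ℕ → P → P → ℝ
  | 0 => fun p q => if p = q then 1 else 0
  | n + 1 => fun p q => ∑ r : P, K p r * kernelPow K n r q

section Generic
variable {P : Type} [Fintype P] [DecidableEq P] {K : P → P → ℝ}

lemma kernelPow_nonneg (hK : ∀ p q, 0 ≤ K p q) : ∀ n p q, 0 ≤ kernelPow K n p q := by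
  intro n
  induction n with
  | zero => intro p q; simp only [kernelPow]; split <;> norm_num
  | succ n ih =>
      intro p q
      exact Finset.sum_nonneg fun r _ => mul_nonneg (hK p r) (ih r q)

lemma kernelPow_sum (hK : ∀ p, ∑ q, K p q = 1) : ∀ n p, ∑ q, kernelPow K n p q = 1 := by
  intro n
  induction n with
  | zero => intro p; simp [kernelPow]
  | succ n ih =>
      intro p
      simp only [kernelPow]
      rw [Finset.sum_comm]
      have : ∀ r : P, ∑ q : P, K p r * kernelPow K n r q = K p r := by
        intro r; rw [← Finset.mul_sum, ih r, mul_one]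
      rw [Finset.sum_congr rfl fun r _ => this r, hK p]

lemma kernelPow_add (a b : ℕ) (p q : P) :
    kernelPow K (a + b) p q = ∑ r : P, kernelPow K a p r * kernelPow K b r q := by
  induction a generalizing p with
  | zero =>
      simp only [Nat.zero_add, kernelPow]
      rw [Finset.sum_congr rfl (fun r _ => by rw [ite_mul, one_mul, zero_mul]),
        Finset.sum_ite_eq (Finset.univ) p (fun r => kernelPow K b r q)]
      simp
  | succ a ih =>
      have h : a + 1 + b = (a + b) + 1 := by ring
      rw [h]
      simp only [kernelPow]
      have h2 : ∀ s : P, K p s * kernelPow K (a+b) s q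
          = ∑ r : P, K p s * (kernelPow K a s r * kernelPow K b r q) := by
        intro s; rw [← Finset.mul_sum, ih s]
      rw [Finset.sum_congr rfl fun s _ => h2 s, Finset.sum_comm]
      refine Finset.sum_congr rfl fun r _ => ?_
      rw [Finset.sum_congr rfl (fun s _ => (mul_assoc _ _ _).symm), ← Finset.sum_mul]

lemma kernelPow_one (p q : P) : kernelPow K 1 p q = K p q := by
  simp only [kernelPow]
  rw [Finset.sum_congr rfl (fun r _ => by rw [mul_ite, mul_one, mul_zero]),
    Finset.sum_ite_eq' (Finset.univ) q (fun r => K p r)]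
  simp

lemma kernelPow_succ_right (n : ℕ) (p q : P) :
    kernelPow K (n + 1) p q = ∑ r : P, kernelPow K n p r * K r q := by
  rw [kernelPow_add n 1]
  exact Finset.sum_congr rfl fun r _ => by rw [kernelPow_one]

end Generic

section Kernel
variable {ι : Type} [Fintype ι] [DecidableEq ι] {P : ι → Type}
    [∀ i, Fintype (P i)] [∀ i, DecidableEq (P i)] [∀ i, Nonempty (P i)]
    (BR : ∀ i : ι, (∀ j, P j) → Prop) [∀ i π, Decidable (BR i π)]
    (e : ι → ℝ)

lemma sK_nonneg (he : ∀ i, e i ∈ Set.Ioo (0 : ℝ) 1) (π π' : ∀ j, P j) :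
    0 ≤ satisficingKernel BR e π π' := by
  refine Finset.prod_nonneg fun i _ => ?_
  obtain ⟨he0, he1⟩ := he i
  have hcard : (0:ℝ) < Fintype.card (P i) := by exact_mod_cast Fintype.card_pos
  split
  · split <;> norm_num
  · have h1 : (0:ℝ) ≤ (1 - e i) * (if π' i = π i then (1:ℝ) else 0) := by
      apply mul_nonneg (by linarith); split <;> norm_num
    have h2 : (0:ℝ) ≤ e i * (1 / (Fintype.card (P i) : ℝ)) := by positivity
    linarith

lemma sum_prod_pi {ι : Type} [Fintype ι] [DecidableEq ι] {P : ι → Type}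
    [∀ i, Fintype (P i)] [∀ i, DecidableEq (P i)] (f : ∀ i, P i → ℝ) :
    ∑ g : ∀ i, P i, ∏ i, f i (g i) = ∏ i, ∑ x : P i, f i x := by
  rw [Finset.prod_univ_sum]
  simp [Fintype.piFinset_univ]

lemma sK_sum (π : ∀ j, P j) : ∑ π' : ∀ j, P j, satisficingKernel BR e π π' = 1 := by
  unfold satisficingKernel
  refine (sum_prod_pi (fun i (x : P i) =>
    if BR i π then (if x = π i then (1:ℝ) else 0)
    else ((1 - e i) * (if x = π i then (1:ℝ) else 0)
          + e i * (1 / (Fintype.card (P i) : ℝ))))).trans ?_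
  refine Finset.prod_eq_one fun i _ => ?_
  have hcard : (Fintype.card (P i) : ℝ) ≠ 0 := by
    have : (0:ℝ) < Fintype.card (P i) := by exact_mod_cast Fintype.card_pos
    linarith
  by_cases h : BR i π
  · simp only [if_pos h]
    rw [Finset.sum_ite_eq' Finset.univ (π i) (fun _ => (1:ℝ))]
    simp
  · simp only [if_neg h]
    rw [Finset.sum_add_distrib, ← Finset.mul_sum,
      Finset.sum_ite_eq' Finset.univ (π i) (fun _ => (1:ℝ)), Finset.sum_const,
      Finset.card_univ]
    simp only [Finset.mem_univ, if_pos, nsmul_eq_mul]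
    field_simp
    ring

lemma sK_absorb (π : ∀ j, P j) (h : ∀ i, BR i π) (π' : ∀ j, P j) :
    satisficingKernel BR e π π' = if π' = π then 1 else 0 := by
  unfold satisficingKernel
  by_cases hp : π' = π
  · subst hp; simp [h]
  · rw [if_neg hp]
    obtain ⟨i, hi⟩ := Function.ne_iff.mp hp
    refine Finset.prod_eq_zero (Finset.mem_univ i) ?_
    simp [h i, hi]

lemma kernelPow_absorb (π : ∀ j, P j) (h : ∀ i, BR i π) (k : ℕ) (q : ∀ j, P j) :
    kernelPow (satisficingKernel BR e) k π q = if q = π then 1 else 0 := by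
  induction k with
  | zero =>
      simp only [kernelPow]
      by_cases hq : q = π
      · simp [hq]
      · rw [if_neg (fun hh => hq hh.symm), if_neg hq]
  | succ k ih =>
      simp only [kernelPow]
      have h1 : ∀ r, satisficingKernel BR e π r * kernelPow (satisficingKernel BR e) k r q
          = if r = π then kernelPow (satisficingKernel BR e) k r q else 0 := by
        intro r; rw [sK_absorb BR e π h r]; split <;> simp
      rw [Finset.sum_congr rfl fun r _ => h1 r,
        Finset.sum_ite_eq' Finset.univ π (fun r => kernelPow (satisficingKernel BR e) k r q)]
      simpa using ih

lemma sK_lower (he : ∀ i, e i ∈ Set.Ioo (0 : ℝ) 1) (π π' : ∀ j, P j)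
    (h : ∀ i, BR i π → π' i = π i) :
    (∏ i : ι, e i / (Fintype.card (P i) : ℝ)) ≤ satisficingKernel BR e π π' := by
  unfold satisficingKernel
  refine Finset.prod_le_prod (fun i _ => ?_) (fun i _ => ?_)
  · obtain ⟨he0, _⟩ := he i
    have : (0:ℝ) < Fintype.card (P i) := by exact_mod_cast Fintype.card_pos
    positivity
  · obtain ⟨he0, he1⟩ := he i
    have hcard : (1:ℝ) ≤ Fintype.card (P i) := by
      exact_mod_cast Fintype.card_pos
    have hdiv : e i / (Fintype.card (P i) : ℝ) ≤ e i := by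
      apply div_le_self he0.le hcard
    by_cases hb : BR i π
    · rw [if_pos hb, if_pos (h i hb)]
      linarith
    · rw [if_neg hb]
      have h1 : (0:ℝ) ≤ (1 - e i) * (if π' i = π i then (1:ℝ) else 0) := by
        apply mul_nonneg (by linarith); split <;> norm_num
      have h2 : e i / (Fintype.card (P i) : ℝ) = e i * (1 / (Fintype.card (P i) : ℝ)) := by
        ring
      linarith [h2 ▸ le_refl (e i / (Fintype.card (P i) : ℝ))]

end Kernel

/-- If the game has the subjective ε-satisficing paths property within the finite joint policy
set, then the Markov chain induced by the satisficing dynamics (unsatisfied players switch with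
probability `e^i ∈ (0,1)` to a uniformly random policy, satisfied players never switch) is
absorbed in the set of subjective ε-equilibria with probability tending to 1. -/
theorem satisficing_dynamics_converge
    {ι : Type} [Fintype ι] [DecidableEq ι] {P : ι → Type}
    [∀ i, Fintype (P i)] [∀ i, DecidableEq (P i)] [∀ i, Nonempty (P i)]
    (BR : ∀ i : ι, (∀ j, P j) → Prop) [∀ i π, Decidable (BR i π)]
    (e : ι → ℝ) (he : ∀ i, e i ∈ Set.Ioo (0 : ℝ) 1)
    (hpaths : ∀ π : ∀ j, P j, ∃ (n : ℕ) (path : ℕ → ∀ j, P j),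
      path 0 = π ∧ (∀ i, BR i (path n)) ∧
      ∀ k, k < n → ∀ i, BR i (path k) → path (k + 1) i = path k i) :
    ∀ π₀ : ∀ j, P j,
      Tendsto
        (fun k => ∑ π' ∈ Finset.univ.filter (fun π' : ∀ j, P j => ∀ i, BR i π'),
          kernelPow (satisficingKernel BR e) k π₀ π')
        atTop (nhds 1) := by
  intro π₀
  set K := satisficingKernel BR e with hKdef
  have hK0 : ∀ p q, 0 ≤ K p q := sK_nonneg BR e he
  have hK1 : ∀ p, ∑ q, K p q = 1 := sK_sum BR e
  set c : ℝ := ∏ i : ι, e i / (Fintype.card (P i) : ℝ) with hcdef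
  have hc0 : 0 < c := by
    refine Finset.prod_pos fun i _ => ?_
    have : (0:ℝ) < Fintype.card (P i) := by exact_mod_cast Fintype.card_pos
    exact div_pos (he i).1 this
  have hc1 : c ≤ 1 := by
    refine Finset.prod_le_one (fun i _ => ?_) (fun i _ => ?_)
    · have : (0:ℝ) < Fintype.card (P i) := by exact_mod_cast Fintype.card_pos
      exact div_nonneg (he i).1.le this.le
    · have hcard : (1:ℝ) ≤ Fintype.card (P i) := by exact_mod_cast Fintype.card_pos
      have := div_le_self (he i).1.le hcard
      linarith [(he i).2]
  choose n pth h0 hend hstep using hpaths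
  set m : ℕ := (Finset.univ.sup n) + 1 with hmdef
  have hm1 : 1 ≤ m := Nat.succ_le_succ (Nat.zero_le _)
  have hnm : ∀ π, n π ≤ m :=
    fun π => le_trans (Finset.le_sup (Finset.mem_univ π)) (Nat.le_succ _)
  set A := Finset.univ.filter (fun π' : ∀ j, P j => ∀ i, BR i π') with hAdef
  set F : ℕ → (∀ j, P j) → ℝ := fun k π => ∑ π' ∈ A, kernelPow K k π π' with hFdef
  -- path lower bound
  have hpathlb : ∀ π : ∀ j, P j, ∀ k, k ≤ n π → c ^ k ≤ kernelPow K k π (pth π k) := by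
    intro π k
    induction k with
    | zero =>
        intro _
        rw [h0 π]
        simp [kernelPow]
    | succ k ih =>
        intro hk
        have h1 := ih (Nat.le_of_succ_le hk)
        rw [kernelPow_succ_right]
        have hlow : c ≤ K (pth π k) (pth π (k+1)) :=
          sK_lower BR e he _ _ (fun i hb => hstep π k (Nat.lt_of_succ_le hk) i hb)
        calc c ^ (k+1) = c ^ k * c := by ring
          _ ≤ kernelPow K k π (pth π k) * K (pth π k) (pth π (k+1)) :=
              mul_le_mul h1 hlow hc0.le (kernelPow_nonneg hK0 k π _)
          _ ≤ ∑ r, kernelPow K k π r * K r (pth π (k+1)) :=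
              Finset.single_le_sum
                (fun r _ => mul_nonneg (kernelPow_nonneg hK0 k π r) (hK0 r _))
                (Finset.mem_univ _)
  have hmemA : ∀ π : ∀ j, P j, (∀ i, BR i π) → π ∈ A := by
    intro π h; rw [hAdef]; simp [h]
  -- lower bound for absorption within m steps
  have hFm : ∀ π : ∀ j, P j, c ^ m ≤ F m π := by
    intro π
    have hmeq : m = n π + (m - n π) := (Nat.add_sub_cancel' (hnm π)).symm
    have h2 : kernelPow K (m - n π) (pth π (n π)) (pth π (n π)) = 1 := by
      rw [kernelPow_absorb BR e _ (hend π)]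
      simp
    have key : c ^ m ≤ kernelPow K m π (pth π (n π)) := by
      conv_rhs => rw [hmeq]
      rw [kernelPow_add]
      calc c ^ m ≤ c ^ (n π) := pow_le_pow_of_le_one hc0.le hc1 (hnm π)
        _ = c ^ (n π) * 1 := by ring
        _ ≤ kernelPow K (n π) π (pth π (n π))
              * kernelPow K (m - n π) (pth π (n π)) (pth π (n π)) := by
            rw [h2]
            exact mul_le_mul_of_nonneg_right (hpathlb π (n π) le_rfl) (by norm_num)
        _ ≤ ∑ r, kernelPow K (n π) π r * kernelPow K (m - n π) r (pth π (n π)) :=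
            Finset.single_le_sum
              (f := fun r => kernelPow K (n π) π r * kernelPow K (m - n π) r (pth π (n π)))
              (fun r _ => mul_nonneg (kernelPow_nonneg hK0 _ π r) (kernelPow_nonneg hK0 _ r _))
              (Finset.mem_univ (pth π (n π)))
    exact key.trans
      (Finset.single_le_sum (fun r _ => kernelPow_nonneg hK0 m π r) (hmemA _ (hend π)))
  -- F = 1 on A
  have hFabs1 : ∀ r, r ∈ A → ∀ k, F k r = 1 := by
    intro r hr k
    have hbr : ∀ i, BR i r := by
      have := hr; rw [hAdef] at this; exact (Finset.mem_filter.mp this).2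
    rw [hFdef]
    simp only
    rw [Finset.sum_congr rfl (fun π' _ => kernelPow_absorb BR e r hbr k π'),
      Finset.sum_ite_eq' A r (fun _ => (1:ℝ))]
    simp [hr]
  -- basic bounds on F
  have hF0 : ∀ k π, 0 ≤ F k π :=
    fun k π => Finset.sum_nonneg fun π' _ => kernelPow_nonneg hK0 k π π'
  have hFle1 : ∀ k π, F k π ≤ 1 := by
    intro k π
    have := Finset.sum_le_sum_of_subset_of_nonneg
      (Finset.subset_univ A) (fun r _ _ => kernelPow_nonneg hK0 k π r)
    calc F k π ≤ ∑ π' : ∀ j, P j, kernelPow K k π π' := this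
      _ = 1 := kernelPow_sum hK1 k π
  -- decomposition of F (k + k') through intermediate states
  have hdecomp : ∀ k k' π, F (k + k') π = ∑ r, kernelPow K k π r * F k' r := by
    intro k k' π
    rw [hFdef]
    simp only
    rw [Finset.sum_congr rfl (fun π' _ => kernelPow_add k k' π π'), Finset.sum_comm]
    exact Finset.sum_congr rfl fun r _ => (Finset.mul_sum _ _ _).symm
  -- complementary mass
  have hcompl : ∀ k π, ∑ r ∈ Finset.univ.filter (fun r => ¬ (∀ i, BR i r)),
      kernelPow K k π r = 1 - F k π := by
    intro k π
    have := Finset.sum_filter_add_sum_filter_not Finset.univ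
      (fun r : ∀ j, P j => ∀ i, BR i r) (fun r => kernelPow K k π r)
    rw [kernelPow_sum hK1 k π] at this
    have hA : ∑ r ∈ Finset.univ.filter (fun r : ∀ j, P j => ∀ i, BR i r),
        kernelPow K k π r = F k π := by rw [hFdef]
    linarith [this, hA]
  -- monotonicity
  have hmono : ∀ k π, F k π ≤ F (k + 1) π := by
    intro k π
    rw [hdecomp k 1 π]
    have hterm : ∀ r, r ∈ A → kernelPow K k π r * F 1 r = kernelPow K k π r := by
      intro r hr; rw [hFabs1 r hr 1, mul_one]
    calc F k π = ∑ r ∈ A, kernelPow K k π r := by rw [hFdef]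
      _ = ∑ r ∈ A, kernelPow K k π r * F 1 r :=
          (Finset.sum_congr rfl fun r hr => (hterm r hr).symm)
      _ ≤ ∑ r, kernelPow K k π r * F 1 r :=
          Finset.sum_le_sum_of_subset_of_nonneg (Finset.subset_univ A)
            (fun r _ _ => mul_nonneg (kernelPow_nonneg hK0 k π r) (hF0 1 r))
  have hMono : Monotone (fun k => F k π₀) := monotone_nat_of_le_succ (fun k => hmono k π₀)
  -- contraction
  have hcontr : ∀ k, 1 - F (k + m) π₀ ≤ (1 - c ^ m) * (1 - F k π₀) := by
    intro k
    rw [hdecomp k m π₀,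
      ← Finset.sum_filter_add_sum_filter_not Finset.univ (fun r : ∀ j, P j => ∀ i, BR i r)
        (fun r => kernelPow K k π₀ r * F m r)]
    have e1 : ∑ r ∈ Finset.univ.filter (fun r : ∀ j, P j => ∀ i, BR i r),
        kernelPow K k π₀ r * F m r = F k π₀ := by
      rw [Finset.sum_congr rfl (fun r hr => by
        rw [hFabs1 r (by rw [hAdef]; exact hr) m, mul_one])]
    have e2 : ∑ r ∈ Finset.univ.filter (fun r : ∀ j, P j => ¬ (∀ i, BR i r)),
        kernelPow K k π₀ r * c ^ m ≤
        ∑ r ∈ Finset.univ.filter (fun r : ∀ j, P j => ¬ (∀ i, BR i r)),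
        kernelPow K k π₀ r * F m r :=
      Finset.sum_le_sum fun r _ =>
        mul_le_mul_of_nonneg_left (hFm r) (kernelPow_nonneg hK0 k π₀ r)
    have e3 : ∑ r ∈ Finset.univ.filter (fun r : ∀ j, P j => ¬ (∀ i, BR i r)),
        kernelPow K k π₀ r * c ^ m = (1 - F k π₀) * c ^ m := by
      rw [← Finset.sum_mul, hcompl k π₀]
    rw [e1]
    nlinarith [e2, e3]
  -- geometric decay along multiples of m
  have hgeom : ∀ j : ℕ, 1 - F (j * m) π₀ ≤ (1 - c ^ m) ^ j := by
    intro j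
    induction j with
    | zero =>
        simp only [Nat.zero_mul, pow_zero]
        linarith [hF0 0 π₀]
    | succ j ih =>
        have h1 : (j + 1) * m = j * m + m := by ring
        rw [h1]
        have h2 := hcontr (j * m)
        have h3 : (0:ℝ) ≤ 1 - c ^ m := by
          have : c ^ m ≤ 1 := pow_le_one₀ hc0.le hc1
          linarith
        calc 1 - F (j * m + m) π₀ ≤ (1 - c ^ m) * (1 - F (j * m) π₀) := h2
          _ ≤ (1 - c ^ m) * (1 - c ^ m) ^ j := mul_le_mul_of_nonneg_left ih h3
          _ = (1 - c ^ m) ^ (j + 1) := by ring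
  have hbound : ∀ k, 1 - F k π₀ ≤ (1 - c ^ m) ^ (k / m) := by
    intro k
    have h1 : F (k / m * m) π₀ ≤ F k π₀ := hMono (Nat.div_mul_le_self k m)
    linarith [hgeom (k / m)]
  -- limits
  have hδ0 : 0 < c ^ m := pow_pos hc0 m
  have hδ1 : c ^ m ≤ 1 := pow_le_one₀ hc0.le hc1
  have hdivtop : Tendsto (fun k : ℕ => k / m) atTop atTop := by
    apply tendsto_atTop_atTop.mpr
    intro b
    exact ⟨b * m, fun k hk => (Nat.le_div_iff_mul_le hm1).mpr hk⟩
  have hpow : Tendsto (fun k : ℕ => (1 - c ^ m) ^ (k / m)) atTop (nhds 0) :=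
    (tendsto_pow_atTop_nhds_zero_of_lt_one (by linarith) (by linarith)).comp hdivtop
  have hlow : Tendsto (fun k : ℕ => 1 - (1 - c ^ m) ^ (k / m)) atTop (nhds 1) := by
    have h := (tendsto_const_nhds (x := (1:ℝ))).sub hpow
    simpa using h
  have main : Tendsto (fun k => F k π₀) atTop (nhds 1) :=
    tendsto_of_tendsto_of_tendsto_of_le_of_le hlow tendsto_const_nhds
      (fun k => by linarith [hbound k]) (fun k => hFle1 k π₀)
  simpa only [hFdef] using main
end

section
/- Satisficing-paths property via symmetry: Let N players each have the same finite policy set Π^0 (so Π = (Π^0)^N), and suppose the subjective best-response predicate is symmetric in the sense: if at a joint policy π two players i and j use the same individual policy, then player i is subjectively ε-best-responding at π if and only if player j is. Suppose further that there exists a symmetric subjective ε-equilibrium π* ∈ Π (all players using the same individual policy, with each subjectively ε-best-responding). Then from every π ∈ Π there exists a subjective ε-satisficing path of finite length within Π terminating at a subjective ε-equilibrium. -/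
private lemma path_prepend {ι P0 : Type} (BR : ι → (ι → P0) → Prop)
    (π π' : ι → P0) (hmove : ∀ i, BR i π → π' i = π i)
    (h : ∃ (n : ℕ) (path : ℕ → ι → P0), path 0 = π' ∧ (∀ i, BR i (path n)) ∧
      ∀ k, k < n → ∀ i, BR i (path k) → path (k + 1) i = path k i) :
    ∃ (n : ℕ) (path : ℕ → ι → P0), path 0 = π ∧ (∀ i, BR i (path n)) ∧
      ∀ k, k < n → ∀ i, BR i (path k) → path (k + 1) i = path k i := by
  obtain ⟨n, path, h0, hend, hstep⟩ := h
  refine ⟨n + 1, fun k => if k = 0 then π else path (k - 1), by simp, by simpa using hend, ?_⟩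
  intro k hk i hbr
  match k with
  | 0 => simpa [h0] using hmove i (by simpa using hbr)
  | k + 1 => simpa using hstep k (by omega) i (by simpa using hbr)

private lemma cohort_aux {ι P0 : Type} [Fintype ι] [DecidableEq P0]
    (BR : ι → (ι → P0) → Prop)
    (hsym : ∀ (π : ι → P0) (i j : ι), π i = π j → (BR i π ↔ BR j π))
    (hstar : ∃ p : P0, ∀ i, BR i (fun _ => p)) :
    ∀ (m : ℕ) (π : ι → P0) (p : P0), (∃ i, π i = p) →
      Fintype.card ι ≤ (Finset.univ.filter (fun i => π i = p)).card + m →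
      ∃ (n : ℕ) (path : ℕ → ι → P0), path 0 = π ∧ (∀ i, BR i (path n)) ∧
        ∀ k, k < n → ∀ i, BR i (path k) → path (k + 1) i = path k i := by
  classical
  intro m
  induction m with
  | zero =>
    intro π p hne hcard
    -- class is everything
    have hall : ∀ i, π i = p := by
      intro i
      have : (Finset.univ.filter (fun i => π i = p)) = Finset.univ := by
        apply Finset.eq_univ_of_card
        have := Finset.card_le_univ (Finset.univ.filter (fun i => π i = p))
        omega
      have := Finset.mem_filter.mp (this ▸ Finset.mem_univ i)
      exact this.2
    by_cases hsat : ∀ i, BR i π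
    · exact ⟨0, fun _ => π, rfl, hsat, by omega⟩
    · push_neg at hsat
      obtain ⟨j, hj⟩ := hsat
      obtain ⟨ps, hps⟩ := hstar
      refine ⟨1, fun k => if k = 0 then π else fun _ => ps, by simp, by simpa using hps, ?_⟩
      intro k hk i hbr
      interval_cases k
      simp only [if_pos rfl] at hbr
      exact absurd ((hsym π i j (by rw [hall i, hall j])).mp hbr) hj
  | succ m ih =>
    intro π p hne hcard
    by_cases hsat : ∀ i, BR i π
    · exact ⟨0, fun _ => π, rfl, hsat, by omega⟩
    push_neg at hsat
    obtain ⟨j, hj⟩ := hsat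
    by_cases hall : ∀ i, π i = p
    · -- class = univ, all unsatisfied, one step to equilibrium
      obtain ⟨ps, hps⟩ := hstar
      refine ⟨1, fun k => if k = 0 then π else fun _ => ps, by simp, by simpa using hps, ?_⟩
      intro k hk i hbr
      interval_cases k
      simp only [if_pos rfl] at hbr
      exact absurd ((hsym π i j (by rw [hall i, hall j])).mp hbr) hj
    push_neg at hall
    by_cases hout : ∃ j0, π j0 ≠ p ∧ ¬ BR j0 π
    · -- an unsatisfied outsider joins the cohort
      obtain ⟨j0, hj0p, hj0br⟩ := hout
      apply path_prepend BR π (fun i => if i = j0 then p else π i)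
      · intro i hbri
        by_cases h : i = j0
        · exact absurd (h ▸ hbri) hj0br
        · simp [h]
      · apply ih (fun i => if i = j0 then p else π i) p ⟨j0, by simp⟩
        have hsub : insert j0 (Finset.univ.filter (fun i => π i = p)) ⊆
            Finset.univ.filter (fun i => (if i = j0 then p else π i) = p) := by
          intro i hi
          simp only [Finset.mem_insert, Finset.mem_filter, Finset.mem_univ, true_and] at *
          rcases hi with h | h
          · simp [h]
          · split <;> [rfl; exact h]
        have hnot : j0 ∉ Finset.univ.filter (fun i => π i = p) := by simp [hj0p]
        have := Finset.card_le_card hsub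
        rw [Finset.card_insert_of_notMem hnot] at this
        omega
    · -- all outsiders satisfied; hence whole cohort unsatisfied; cohort jumps to an outsider policy
      push_neg at hout
      have hjp : π j = p := by
        by_contra h
        exact hj (hout j h)
      have hcoh : ∀ i, π i = p → ¬ BR i π := by
        intro i hi hbri
        exact hj ((hsym π i j (hi.trans hjp.symm)).mp hbri)
      obtain ⟨j0, hj0⟩ := hall
      apply path_prepend BR π (fun i => if π i = p then π j0 else π i)
      · intro i hbri
        by_cases h : π i = p
        · exact absurd hbri (hcoh i h)
        · simp [h]
      · apply ih (fun i => if π i = p then π j0 else π i) (π j0) ⟨j0, by simp [hj0]⟩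
        have hsub : insert j0 (Finset.univ.filter (fun i => π i = p)) ⊆
            Finset.univ.filter (fun i => (if π i = p then π j0 else π i) = π j0) := by
          intro i hi
          simp only [Finset.mem_insert, Finset.mem_filter, Finset.mem_univ, true_and] at *
          rcases hi with h | h
          · subst h; simp [hj0]
          · simp [h]
        have hnot : j0 ∉ Finset.univ.filter (fun i => π i = p) := by simp [hj0]
        have := Finset.card_le_card hsub
        rw [Finset.card_insert_of_notMem hnot] at this
        omega

/-- If all `N` players share the same finite policy set, the subjective best-response predicate
is symmetric (players using the same individual policy are simultaneously best-responding or
not), and a symmetric subjective ε-equilibrium exists, then from every joint policy there is a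
finite subjective ε-satisficing path terminating at a subjective ε-equilibrium. -/
theorem satisficing_paths_from_symmetry
    {ι P0 : Type} [Fintype ι] [Nonempty ι] [Fintype P0]
    (BR : ι → (ι → P0) → Prop)
    (hsym : ∀ (π : ι → P0) (i j : ι), π i = π j → (BR i π ↔ BR j π))
    (hstar : ∃ p : P0, ∀ i, BR i (fun _ => p)) :
    ∀ π : ι → P0, ∃ (n : ℕ) (path : ℕ → ι → P0),
      path 0 = π ∧ (∀ i, BR i (path n)) ∧
      ∀ k, k < n → ∀ i, BR i (path k) → path (k + 1) i = path k i := by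
  classical
  intro π
  obtain ⟨i0⟩ := (inferInstance : Nonempty ι)
  exact cohort_aux BR hsym hstar (Fintype.card ι) π (π i0) ⟨i0, rfl⟩ (by omega)
end

section
/- Mean-field state observability yields an MDP: Let N players have local states in a finite set S and actions in finite U, with local transitions x^i_{t+1} ∼ P_loc(· | x^i_t, μ_t, u^i_t) conditionally independent across players given the global state and joint action, where μ_t is the empirical measure of the global state. Fix player i, suppose all other players use the same stationary policy g ∈ P(U | S × Emp_N) applied to their own observation (x^j_t, μ_t) (mean-field symmetric policies), with actions conditionally independent given the global state. Then the process y^i_t = (x^i_t, μ_t) is a controlled Markov process for player i: for all t, P(y^i_{t+1} = w | y^i_0, u^i_0, …, y^i_t, u^i_t) = P(y^i_{t+1} = w | y^i_t, u^i_t), and this conditional law does not depend on player i's own policy or the initial distribution. -/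
open Classical

noncomputable section

/-- The empirical measure (as a probability vector) of a global state `s ∈ S^N`. -/
def empDist {S : Type} [DecidableEq S] {N : ℕ} (s : Fin N → S) : S → ℝ :=
  fun x => ((Finset.univ.filter fun j : Fin N => s j = x).card : ℝ) / (N : ℝ)

variable {S U : Type} [Fintype S] [Fintype U] [DecidableEq S] [DecidableEq U] {N : ℕ}

/-- Probability of joint action `a` at global state `s` when player `i` uses the stationary
policy `πi` on its observation `(s^i, μ(s))` and every other player uses the common stationary
policy `g` on its own observation, with actions conditionally independent given the state. -/
def jointActProb (i : Fin N) (πi g : S → (S → ℝ) → U → ℝ)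
    (s : Fin N → S) (a : Fin N → U) : ℝ :=
  ∏ j : Fin N, if j = i then πi (s i) (empDist s) (a i) else g (s j) (empDist s) (a j)

/-- Product-form global transition probability with local kernel `Ploc` and empirical-measure
coupling: local state transitions are conditionally independent given the state and actions. -/
def transProb (Ploc : S → (S → ℝ) → U → S → ℝ)
    (s : Fin N → S) (a : Fin N → U) (s' : Fin N → S) : ℝ :=
  ∏ j : Fin N, Ploc (s j) (empDist s) (a j) (s' j)

/-- Probability that player `i` observes the local-observation history
`(y_0, u_0, …, y_t, u_t)` (where `y_k = (x^i_k, μ_k)`), obtained by summing the probabilities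
of all global trajectories consistent with it. -/
def histProb (ν : (Fin N → S) → ℝ) (πi g : S → (S → ℝ) → U → ℝ)
    (Ploc : S → (S → ℝ) → U → S → ℝ) (i : Fin N) (t : ℕ)
    (ys : Fin (t + 1) → S × (S → ℝ)) (us : Fin (t + 1) → U) : ℝ :=
  ∑ xs : Fin (t + 1) → (Fin N → S), ∑ as : Fin (t + 1) → (Fin N → U),
    if (∀ k : Fin (t + 1), ((xs k) i, empDist (xs k)) = ys k ∧ (as k) i = us k) then
      ν (xs 0) * (∏ k : Fin (t + 1), jointActProb i πi g (xs k) (as k))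
        * ∏ k : Fin t, transProb Ploc (xs k.castSucc) (as k.castSucc) (xs k.succ)
    else 0

/-- Probability that player `i` observes the history `(y_0, u_0, …, y_t, u_t)` and then the
next observation `y_{t+1} = w`. -/
def histNextProb (ν : (Fin N → S) → ℝ) (πi g : S → (S → ℝ) → U → ℝ)
    (Ploc : S → (S → ℝ) → U → S → ℝ) (i : Fin N) (t : ℕ)
    (ys : Fin (t + 1) → S × (S → ℝ)) (us : Fin (t + 1) → U) (w : S × (S → ℝ)) : ℝ :=
  ∑ xs : Fin (t + 2) → (Fin N → S), ∑ as : Fin (t + 1) → (Fin N → U),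
    if (∀ k : Fin (t + 1), ((xs k.castSucc) i, empDist (xs k.castSucc)) = ys k
          ∧ (as k) i = us k)
        ∧ ((xs (Fin.last (t + 1))) i, empDist (xs (Fin.last (t + 1)))) = w then
      ν (xs 0) * (∏ k : Fin (t + 1), jointActProb i πi g (xs k.castSucc) (as k))
        * ∏ k : Fin (t + 1), transProb Ploc (xs k.castSucc) (as k) (xs k.succ)
    else 0

/-! ### Auxiliary lemmas -/

set_option linter.unusedSectionVars false in
lemma empDist_comp_perm (s : Fin N → S) (π : Equiv.Perm (Fin N)) :
    empDist (fun j => s (π j)) = empDist s := by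
  funext x
  unfold empDist
  congr 2
  rw [Finset.card_filter, Finset.card_filter]
  exact Equiv.sum_comp π (fun j => if s j = x then (1:ℕ) else 0)

set_option linter.unusedSectionVars false in
lemma card_fiber_eq_of_empDist_eq (i : Fin N) (s σ : Fin N → S) (hμ : empDist s = empDist σ)
    (x : S) :
    (Finset.univ.filter fun j : Fin N => s j = x).card
      = (Finset.univ.filter fun j : Fin N => σ j = x).card := by
  have hN : (N : ℝ) ≠ 0 := by
    have : 0 < N := i.pos
    positivity
  have h := congrFun hμ x
  unfold empDist at h
  field_simp at h
  exact_mod_cast h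

set_option linter.unusedSectionVars false in
lemma exists_perm_fixing (i : Fin N) (s σ : Fin N → S) (hi : s i = σ i)
    (hμ : empDist s = empDist σ) :
    ∃ π : Equiv.Perm (Fin N), π i = i ∧ ∀ j, s (π j) = σ j := by
  have hcard : ∀ x : S, (Finset.univ.filter fun j : Fin N => j ≠ i ∧ σ j = x).card
      = (Finset.univ.filter fun j : Fin N => j ≠ i ∧ s j = x).card := by
    intro x
    have key : ∀ τ : Fin N → S, τ i = s i →
        (Finset.univ.filter fun j : Fin N => τ j = x).card
          = (if s i = x then 1 else 0)
            + (Finset.univ.filter fun j : Fin N => j ≠ i ∧ τ j = x).card := by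
      intro τ hτ
      have hsplit := Finset.card_filter_add_card_filter_not
        (s := Finset.univ.filter fun j : Fin N => τ j = x) (p := fun j => j = i)
      rw [Finset.filter_filter, Finset.filter_filter] at hsplit
      have h1 : (Finset.univ.filter fun j : Fin N => τ j = x ∧ j = i)
          = if s i = x then {i} else ∅ := by
        ext j
        simp only [Finset.mem_filter, Finset.mem_univ, true_and]
        by_cases hx : s i = x
        · simp only [if_pos hx, Finset.mem_singleton]
          constructor
          · rintro ⟨_, rfl⟩; rfl
          · rintro rfl; exact ⟨by rw [hτ, hx], rfl⟩
        · simp only [if_neg hx, Finset.notMem_empty, iff_false, not_and]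
          rintro h rfl; exact hx (by rw [← hτ]; exact h)
      have h2 : (Finset.univ.filter fun j : Fin N => τ j = x ∧ ¬ j = i)
          = (Finset.univ.filter fun j : Fin N => j ≠ i ∧ τ j = x) := by
        ext j; simp [Finset.mem_filter, and_comm]
      have h3 : (if s i = x then ({i} : Finset (Fin N)) else ∅).card
          = if s i = x then 1 else 0 := by split <;> simp
      rw [h1, h2, h3] at hsplit
      omega
    have e1 := key s rfl
    have e2 := key σ hi.symm
    have e3 := card_fiber_eq_of_empDist_eq i s σ hμ x
    omega
  let e : (x : S) → {j // j ∈ Finset.univ.filter fun j : Fin N => j ≠ i ∧ σ j = x}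
      ≃ {j // j ∈ Finset.univ.filter fun j : Fin N => j ≠ i ∧ s j = x} :=
    fun x => Finset.equivOfCardEq (hcard x)
  have emem : ∀ (x : S) (a), ((e x a : Fin N) ≠ i ∧ s (e x a : Fin N) = x) := by
    intro x a
    have h2 := (e x a).2
    rw [Finset.mem_filter] at h2
    exact h2.2
  let f : Fin N → Fin N := fun j =>
    if h : j = i then i else
      (e (σ j) ⟨j, by simp [Finset.mem_filter, h]⟩ : Fin N)
  have hf : ∀ j, s (f j) = σ j := by
    intro j
    by_cases h : j = i
    · subst h; simp [f, hi]
    · simp only [f, dif_neg h]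
      exact (emem (σ j) _).2
  have hfi : f i = i := by simp [f]
  have hinj : Function.Injective f := by
    intro j j' hjj
    by_cases h : j = i <;> by_cases h' : j' = i
    · rw [h, h']
    · exfalso
      rw [h] at hjj
      simp only [f, dif_pos, dif_neg h'] at hjj
      exact (emem (σ j') _).1 hjj.symm
    · exfalso
      rw [h'] at hjj
      simp only [f, dif_neg h, dif_pos] at hjj
      exact (emem (σ j) _).1 hjj
    · have hσ : σ j = σ j' := by
        rw [← hf j, ← hf j', hjj]
      simp only [f, dif_neg h, dif_neg h'] at hjj
      have aux : ∀ (x x' : S) (_ : x = x')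
          (a : {j // j ∈ Finset.univ.filter fun j : Fin N => j ≠ i ∧ σ j = x})
          (a' : {j // j ∈ Finset.univ.filter fun j : Fin N => j ≠ i ∧ σ j = x'}),
          (e x a : Fin N) = (e x' a' : Fin N) → (a : Fin N) = (a' : Fin N) := by
        rintro x _ rfl a a' hh
        exact congrArg Subtype.val ((e x).injective (Subtype.coe_injective hh))
      have := aux (σ j) (σ j') hσ _ _ hjj
      simpa using this
  let π := Equiv.ofBijective f (Finite.injective_iff_bijective.mp hinj)
  exact ⟨π, hfi, hf⟩

/-- One-step probability that the next observation of player `i` is `w`, given global state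
`s` and own action `u`, with the other players acting according to `g`. -/
def stepFun (g : S → (S → ℝ) → U → ℝ) (Ploc : S → (S → ℝ) → U → S → ℝ)
    (i : Fin N) (s : Fin N → S) (u : U) (w : S × (S → ℝ)) : ℝ :=
  ∑ b : Fin N → U, ∑ x' : Fin N → S,
    if b i = u ∧ (x' i, empDist x') = w then
      (∏ j, if j = i then (1:ℝ) else g (s j) (empDist s) (b j)) * transProb Ploc s b x'
    else 0

set_option linter.unusedSectionVars false in
lemma stepFun_perm (g : S → (S → ℝ) → U → ℝ) (Ploc : S → (S → ℝ) → U → S → ℝ)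
    (i : Fin N) (π : Equiv.Perm (Fin N)) (hπ : π i = i) (s : Fin N → S) (u : U)
    (w : S × (S → ℝ)) :
    stepFun g Ploc i (fun j => s (π j)) u w = stepFun g Ploc i s u w := by
  have hπs : π.symm i = i := by
    conv_lhs => rw [← hπ]
    exact π.symm_apply_apply i
  have hcond : ∀ j : Fin N, (π j = i) = (j = i) := by
    intro j
    apply propext
    constructor
    · intro h; apply π.injective; rw [h, hπ]
    · intro h; rw [h, hπ]
  unfold stepFun transProb
  rw [empDist_comp_perm]
  refine Fintype.sum_equiv (Equiv.arrowCongr π (Equiv.refl U)) _ _ (fun b => ?_)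
  refine Fintype.sum_equiv (Equiv.arrowCongr π (Equiv.refl S)) _ _ (fun x' => ?_)
  have harr : ((Equiv.arrowCongr π (Equiv.refl S)) x') = (fun j => x' (π.symm j)) := rfl
  rw [harr]
  simp only [Equiv.arrowCongr_apply, Equiv.coe_refl, Function.comp, id_eq]
  have hx'i : x' (π.symm i) = x' i := by rw [hπs]
  have hemp : empDist (fun j => x' (π.symm j)) = empDist x' := empDist_comp_perm x' π.symm
  rw [hx'i, hemp, show b (π.symm i) = b i by rw [hπs]]
  congr 1
  have e1 : (∏ j, if j = i then (1:ℝ) else g (s (π j)) (empDist s) (b j))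
      = ∏ j, if j = i then (1:ℝ) else g (s j) (empDist s) (b (π.symm j)) := by
    rw [← Equiv.prod_comp π (fun j => if j = i then (1:ℝ) else g (s j) (empDist s) (b (π.symm j)))]
    apply Finset.prod_congr rfl
    intro j _
    simp only [hcond j, π.symm_apply_apply]
  have e2 : (∏ j, Ploc (s (π j)) (empDist s) (b j) (x' j))
      = ∏ j, Ploc (s j) (empDist s) (b (π.symm j)) (x' (π.symm j)) := by
    rw [← Equiv.prod_comp π (fun j => Ploc (s j) (empDist s) (b (π.symm j)) (x' (π.symm j)))]
    apply Finset.prod_congr rfl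
    intro j _
    rw [π.symm_apply_apply]
  rw [e1, e2]

/-- The one-step transition kernel for the observation process `(x^i, μ)`, defined on
observations via choice of a representative global state. -/
def stepKernel (g : S → (S → ℝ) → U → ℝ) (Ploc : S → (S → ℝ) → U → S → ℝ)
    (i : Fin N) (y : S × (S → ℝ)) (u : U) (w : S × (S → ℝ)) : ℝ :=
  if h : ∃ s : Fin N → S, ((s i, empDist s) = y) then stepFun g Ploc i h.choose u w else 0

set_option linter.unusedSectionVars false in
lemma stepKernel_apply (g : S → (S → ℝ) → U → ℝ) (Ploc : S → (S → ℝ) → U → S → ℝ)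
    (i : Fin N) (s : Fin N → S) (u : U) (w : S × (S → ℝ)) :
    stepKernel g Ploc i (s i, empDist s) u w = stepFun g Ploc i s u w := by
  have h : ∃ σ : Fin N → S, ((σ i, empDist σ) = (s i, empDist s)) := ⟨s, rfl⟩
  rw [stepKernel, dif_pos h]
  have hspec := h.choose_spec
  have h1 : h.choose i = s i := congrArg Prod.fst hspec
  have h2 : empDist h.choose = empDist s := congrArg Prod.snd hspec
  obtain ⟨π, hπi, hπ⟩ := exists_perm_fixing i h.choose s h1 h2
  have : (fun j => h.choose (π j)) = s := funext hπ
  rw [← stepFun_perm g Ploc i π hπi h.choose u w, this]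

lemma sum_ite_pull {α : Type} [Fintype α] (P : Prop) (Q : α → Prop) (C : ℝ) (f : α → ℝ) :
    (∑ a : α, if P ∧ Q a then C * f a else 0)
      = if P then C * ∑ a : α, if Q a then f a else 0 else 0 := by
  by_cases hP : P
  · simp [hP, Finset.mul_sum, mul_ite]
  · simp [hP]

lemma sum_sum_ite_pull {α β : Type} [Fintype α] [Fintype β] (P : Prop) (Q : α → β → Prop)
    (C : ℝ) (f : α → β → ℝ) :
    (∑ a : α, ∑ b : β, if P ∧ Q a b then C * f a b else 0)
      = if P then C * ∑ a : α, ∑ b : β, if Q a b then f a b else 0 else 0 := by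
  by_cases hP : P
  · simp [hP, Finset.mul_sum, mul_ite]
  · simp [hP]

/-- Splitting off the last coordinate of a tuple. -/
def snocEquiv (n : ℕ) (X : Type) : ((Fin n → X) × X) ≃ (Fin (n + 1) → X) where
  toFun p := Fin.snoc p.1 p.2
  invFun f := (fun k => f k.castSucc, f (Fin.last n))
  left_inv p := by
    obtain ⟨f, x⟩ := p
    refine Prod.ext ?_ ?_
    · funext k; simp
    · simp
  right_inv f := by
    funext k
    cases k using Fin.lastCases with
    | last => simp
    | cast k => simp

lemma sum_snoc {n : ℕ} {X : Type} [Fintype X] (F : (Fin (n + 1) → X) → ℝ) :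
    (∑ f : Fin (n + 1) → X, F f)
      = ∑ f₀ : Fin n → X, ∑ x : X, F (Fin.snoc f₀ x) := by
  rw [← Equiv.sum_comp (snocEquiv n X) F, Fintype.sum_prod_type]
  rfl

set_option linter.unusedSectionVars false in
lemma prod_ite_factor (i : Fin N) (c : ℝ) (f : Fin N → ℝ) :
    (∏ j, if j = i then c else f j) = c * ∏ j, if j = i then (1:ℝ) else f j := by
  rw [Fintype.prod_eq_mul_prod_compl i (fun j => if j = i then c else f j),
    Fintype.prod_eq_mul_prod_compl i (fun j => if j = i then (1:ℝ) else f j),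
    ← mul_assoc]
  congr 1
  · simp
  · apply Finset.prod_congr rfl
    intro j hj
    have : j ≠ i := by simpa using hj
    simp [this]

set_option linter.unusedSectionVars false in
lemma jointAct_factor (i : Fin N) (πi g : S → (S → ℝ) → U → ℝ) (s : Fin N → S)
    (b : Fin N → U) :
    jointActProb i πi g s b
      = πi (s i) (empDist s) (b i)
          * ∏ j, if j = i then (1:ℝ) else g (s j) (empDist s) (b j) :=
  prod_ite_factor i _ _

set_option linter.unusedSectionVars false in
lemma sum_jointAct (i : Fin N) (πi g : S → (S → ℝ) → U → ℝ)
    (hg : ∀ x μ, ∑ a : U, g x μ a = 1) (s : Fin N → S) (u : U) :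
    (∑ b : Fin N → U, if b i = u then jointActProb i πi g s b else 0)
      = πi (s i) (empDist s) u := by
  have h1 : ∀ b : Fin N → U, (if b i = u then jointActProb i πi g s b else 0)
      = ∏ j, (if j = i then (if b j = u then πi (s i) (empDist s) (b j) else 0)
          else g (s j) (empDist s) (b j)) := by
    intro b
    by_cases hb : b i = u
    · rw [if_pos hb]
      unfold jointActProb
      refine Finset.prod_congr rfl (fun j _ => ?_)
      by_cases hj : j = i
      · subst hj; simp [hb]
      · simp [hj]
    · rw [if_neg hb]
      symm
      apply Finset.prod_eq_zero (Finset.mem_univ i)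
      simp [hb]
  rw [Finset.sum_congr rfl (fun b _ => h1 b), ← Fintype.piFinset_univ,
    ← Finset.prod_univ_sum (fun _ : Fin N => (Finset.univ : Finset U))
      (fun j a => if j = i then (if a = u then πi (s i) (empDist s) a else 0)
        else g (s j) (empDist s) a)]
  have h2 : ∀ j : Fin N,
      (∑ a : U, if j = i then (if a = u then πi (s i) (empDist s) a else 0)
          else g (s j) (empDist s) a)
        = if j = i then πi (s i) (empDist s) u else 1 := by
    intro j
    by_cases hj : j = i
    · simp only [if_pos hj]
      simp [Finset.sum_ite_eq']
    · simp only [if_neg hj]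
      exact hg (s j) (empDist s)
  rw [Finset.prod_congr rfl (fun j _ => h2 j)]
  simp [Finset.prod_ite_eq']

set_option linter.unusedSectionVars false in
lemma sum_step (i : Fin N) (πi g : S → (S → ℝ) → U → ℝ) (Ploc : S → (S → ℝ) → U → S → ℝ)
    (s : Fin N → S) (u : U) (w : S × (S → ℝ)) :
    (∑ b : Fin N → U, ∑ x' : Fin N → S,
        if b i = u ∧ (x' i, empDist x') = w then
          jointActProb i πi g s b * transProb Ploc s b x'
        else 0)
      = πi (s i) (empDist s) u * stepFun g Ploc i s u w := by
  unfold stepFun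
  rw [Finset.mul_sum]
  refine Finset.sum_congr rfl (fun b _ => ?_)
  rw [Finset.mul_sum]
  refine Finset.sum_congr rfl (fun x' _ => ?_)
  by_cases h : b i = u ∧ (x' i, empDist x') = w
  · rw [if_pos h, if_pos h, jointAct_factor, h.1]
    ring
  · rw [if_neg h, if_neg h, mul_zero]

set_option linter.unusedSectionVars false in
set_option maxHeartbeats 1000000 in
lemma histProb_eq (g πi : S → (S → ℝ) → U → ℝ) (Ploc : S → (S → ℝ) → U → S → ℝ)
    (i : Fin N) (ν : (Fin N → S) → ℝ)
    (hg : ∀ x μ, ∑ a : U, g x μ a = 1) (t : ℕ)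
    (ys : Fin (t + 1) → S × (S → ℝ)) (us : Fin (t + 1) → U) :
    histProb ν πi g Ploc i t ys us
      = ∑ xs : Fin (t + 1) → (Fin N → S), ∑ as : Fin t → (Fin N → U),
          (if ((∀ k : Fin (t + 1), ((xs k) i, empDist (xs k)) = ys k)
                ∧ ∀ k : Fin t, (as k) i = us k.castSucc) then
              ν (xs 0) * (∏ k : Fin t, jointActProb i πi g (xs k.castSucc) (as k))
                * ∏ k : Fin t, transProb Ploc (xs k.castSucc) (as k) (xs k.succ)
            else 0)
            * πi ((xs (Fin.last t)) i) (empDist (xs (Fin.last t))) (us (Fin.last t)) := by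
  unfold histProb
  refine Finset.sum_congr rfl (fun xs _ => ?_)
  rw [sum_snoc (n := t) (X := Fin N → U)]
  refine Finset.sum_congr rfl (fun as₀ _ => ?_)
  have hb : ∀ b : Fin N → U,
      (if (∀ k : Fin (t + 1), ((xs k) i, empDist (xs k)) = ys k
            ∧ ((Fin.snoc as₀ b : Fin (t + 1) → Fin N → U) k) i = us k) then
          ν (xs 0) * (∏ k : Fin (t + 1), jointActProb i πi g (xs k)
              ((Fin.snoc as₀ b : Fin (t + 1) → Fin N → U) k))
            * ∏ k : Fin t, transProb Ploc (xs k.castSucc)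
                ((Fin.snoc as₀ b : Fin (t + 1) → Fin N → U) k.castSucc) (xs k.succ)
        else 0)
      = if (((∀ k : Fin (t + 1), ((xs k) i, empDist (xs k)) = ys k)
              ∧ ∀ k : Fin t, (as₀ k) i = us k.castSucc) ∧ b i = us (Fin.last t)) then
          (ν (xs 0) * (∏ k : Fin t, jointActProb i πi g (xs k.castSucc) (as₀ k))
            * ∏ k : Fin t, transProb Ploc (xs k.castSucc) (as₀ k) (xs k.succ))
          * jointActProb i πi g (xs (Fin.last t)) b
        else 0 := by
    intro b
    have hc : (∀ k : Fin (t + 1), ((xs k) i, empDist (xs k)) = ys k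
          ∧ ((Fin.snoc as₀ b : Fin (t + 1) → Fin N → U) k) i = us k)
        ↔ (((∀ k : Fin (t + 1), ((xs k) i, empDist (xs k)) = ys k)
            ∧ ∀ k : Fin t, (as₀ k) i = us k.castSucc) ∧ b i = us (Fin.last t)) := by
      constructor
      · intro h
        refine ⟨⟨fun k => (h k).1, fun k => ?_⟩, ?_⟩
        · have h2 := (h k.castSucc).2
          rwa [Fin.snoc_castSucc] at h2
        · have h2 := (h (Fin.last t)).2
          rwa [Fin.snoc_last] at h2
      · rintro ⟨⟨h1, h2⟩, h3⟩ k
        refine ⟨h1 k, ?_⟩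
        cases k using Fin.lastCases with
        | last => rwa [Fin.snoc_last]
        | cast k => rw [Fin.snoc_castSucc]; exact h2 k
    have hJ : (∏ k : Fin (t + 1), jointActProb i πi g (xs k)
          ((Fin.snoc as₀ b : Fin (t + 1) → Fin N → U) k))
        = (∏ k : Fin t, jointActProb i πi g (xs k.castSucc) (as₀ k))
            * jointActProb i πi g (xs (Fin.last t)) b := by
      rw [Fin.prod_univ_castSucc]
      simp [Fin.snoc_castSucc, Fin.snoc_last]
    have hT : (∏ k : Fin t, transProb Ploc (xs k.castSucc)
          ((Fin.snoc as₀ b : Fin (t + 1) → Fin N → U) k.castSucc) (xs k.succ))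
        = ∏ k : Fin t, transProb Ploc (xs k.castSucc) (as₀ k) (xs k.succ) := by
      simp [Fin.snoc_castSucc]
    rw [hJ, hT, if_congr hc rfl rfl]
    split_ifs with h
    · ring
    · rfl
  rw [Finset.sum_congr rfl (fun b _ => hb b)]
  by_cases h : ((∀ k : Fin (t + 1), ((xs k) i, empDist (xs k)) = ys k)
      ∧ ∀ k : Fin t, (as₀ k) i = us k.castSucc)
  · rw [if_pos h]
    have hsplit : ∀ b : Fin N → U,
        (if (((∀ k : Fin (t + 1), ((xs k) i, empDist (xs k)) = ys k)
              ∧ ∀ k : Fin t, (as₀ k) i = us k.castSucc) ∧ b i = us (Fin.last t)) then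
            (ν (xs 0) * (∏ k : Fin t, jointActProb i πi g (xs k.castSucc) (as₀ k))
              * ∏ k : Fin t, transProb Ploc (xs k.castSucc) (as₀ k) (xs k.succ))
            * jointActProb i πi g (xs (Fin.last t)) b
          else 0)
        = (ν (xs 0) * (∏ k : Fin t, jointActProb i πi g (xs k.castSucc) (as₀ k))
            * ∏ k : Fin t, transProb Ploc (xs k.castSucc) (as₀ k) (xs k.succ))
          * (if b i = us (Fin.last t) then jointActProb i πi g (xs (Fin.last t)) b else 0) := by
      intro b
      by_cases hb' : b i = us (Fin.last t)
      · rw [if_pos ⟨h, hb'⟩, if_pos hb']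
      · rw [if_neg (fun hh => hb' hh.2), if_neg hb', mul_zero]
    rw [Finset.sum_congr rfl (fun b _ => hsplit b), ← Finset.mul_sum,
      sum_jointAct i πi g hg]
  · rw [if_neg h, zero_mul]
    apply Finset.sum_eq_zero
    intro b _
    rw [if_neg (fun hh => h hh.1)]

set_option linter.unusedSectionVars false in
set_option maxHeartbeats 1000000 in
lemma histNextProb_eq (g πi : S → (S → ℝ) → U → ℝ) (Ploc : S → (S → ℝ) → U → S → ℝ)
    (i : Fin N) (ν : (Fin N → S) → ℝ) (t : ℕ)
    (ys : Fin (t + 1) → S × (S → ℝ)) (us : Fin (t + 1) → U) (w : S × (S → ℝ)) :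
    histNextProb ν πi g Ploc i t ys us w
      = ∑ xs : Fin (t + 1) → (Fin N → S), ∑ as : Fin t → (Fin N → U),
          (if ((∀ k : Fin (t + 1), ((xs k) i, empDist (xs k)) = ys k)
                ∧ ∀ k : Fin t, (as k) i = us k.castSucc) then
              ν (xs 0) * (∏ k : Fin t, jointActProb i πi g (xs k.castSucc) (as k))
                * ∏ k : Fin t, transProb Ploc (xs k.castSucc) (as k) (xs k.succ)
            else 0)
            * (πi ((xs (Fin.last t)) i) (empDist (xs (Fin.last t))) (us (Fin.last t))
                * stepFun g Ploc i (xs (Fin.last t)) (us (Fin.last t)) w) := by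
  unfold histNextProb
  rw [sum_snoc (n := t + 1) (X := Fin N → S)]
  refine Finset.sum_congr rfl (fun xs _ => ?_)
  rw [Finset.sum_comm, sum_snoc (n := t) (X := Fin N → U)]
  refine Finset.sum_congr rfl (fun as₀ _ => ?_)
  have hb : ∀ (b : Fin N → U) (x' : Fin N → S),
      (if (∀ k : Fin (t + 1),
              (((Fin.snoc xs x' : Fin (t + 2) → Fin N → S) k.castSucc) i,
                empDist ((Fin.snoc xs x' : Fin (t + 2) → Fin N → S) k.castSucc)) = ys k
            ∧ ((Fin.snoc as₀ b : Fin (t + 1) → Fin N → U) k) i = us k)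
          ∧ (((Fin.snoc xs x' : Fin (t + 2) → Fin N → S) (Fin.last (t + 1))) i,
              empDist ((Fin.snoc xs x' : Fin (t + 2) → Fin N → S) (Fin.last (t + 1)))) = w then
          ν ((Fin.snoc xs x' : Fin (t + 2) → Fin N → S) 0)
            * (∏ k : Fin (t + 1), jointActProb i πi g
                ((Fin.snoc xs x' : Fin (t + 2) → Fin N → S) k.castSucc)
                ((Fin.snoc as₀ b : Fin (t + 1) → Fin N → U) k))
            * ∏ k : Fin (t + 1), transProb Ploc
                ((Fin.snoc xs x' : Fin (t + 2) → Fin N → S) k.castSucc)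
                ((Fin.snoc as₀ b : Fin (t + 1) → Fin N → U) k)
                ((Fin.snoc xs x' : Fin (t + 2) → Fin N → S) k.succ)
        else 0)
      = if (((∀ k : Fin (t + 1), ((xs k) i, empDist (xs k)) = ys k)
              ∧ ∀ k : Fin t, (as₀ k) i = us k.castSucc)
            ∧ (b i = us (Fin.last t) ∧ (x' i, empDist x') = w)) then
          (ν (xs 0) * (∏ k : Fin t, jointActProb i πi g (xs k.castSucc) (as₀ k))
            * ∏ k : Fin t, transProb Ploc (xs k.castSucc) (as₀ k) (xs k.succ))
          * (jointActProb i πi g (xs (Fin.last t)) b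
              * transProb Ploc (xs (Fin.last t)) b x')
        else 0 := by
    intro b x'
    have hc : ((∀ k : Fin (t + 1),
            (((Fin.snoc xs x' : Fin (t + 2) → Fin N → S) k.castSucc) i,
              empDist ((Fin.snoc xs x' : Fin (t + 2) → Fin N → S) k.castSucc)) = ys k
          ∧ ((Fin.snoc as₀ b : Fin (t + 1) → Fin N → U) k) i = us k)
        ∧ (((Fin.snoc xs x' : Fin (t + 2) → Fin N → S) (Fin.last (t + 1))) i,
            empDist ((Fin.snoc xs x' : Fin (t + 2) → Fin N → S) (Fin.last (t + 1)))) = w)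
        ↔ (((∀ k : Fin (t + 1), ((xs k) i, empDist (xs k)) = ys k)
              ∧ ∀ k : Fin t, (as₀ k) i = us k.castSucc)
            ∧ (b i = us (Fin.last t) ∧ (x' i, empDist x') = w)) := by
      simp only [Fin.snoc_castSucc, Fin.snoc_last]
      constructor
      · rintro ⟨h, hw⟩
        refine ⟨⟨fun k => (h k).1, fun k => ?_⟩, ?_, hw⟩
        · have h2 := (h k.castSucc).2
          rwa [Fin.snoc_castSucc] at h2
        · have h2 := (h (Fin.last t)).2
          rwa [Fin.snoc_last] at h2
      · rintro ⟨⟨h1, h2⟩, h3, hw⟩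
        refine ⟨fun k => ⟨h1 k, ?_⟩, hw⟩
        cases k using Fin.lastCases with
        | last => rwa [Fin.snoc_last]
        | cast k => rw [Fin.snoc_castSucc]; exact h2 k
    have h0 : (Fin.snoc xs x' : Fin (t + 2) → Fin N → S) 0 = xs 0 := by
      rw [show (0 : Fin (t + 2)) = (0 : Fin (t + 1)).castSucc from rfl, Fin.snoc_castSucc]
    have hJ : (∏ k : Fin (t + 1), jointActProb i πi g
          ((Fin.snoc xs x' : Fin (t + 2) → Fin N → S) k.castSucc)
          ((Fin.snoc as₀ b : Fin (t + 1) → Fin N → U) k))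
        = (∏ k : Fin t, jointActProb i πi g (xs k.castSucc) (as₀ k))
            * jointActProb i πi g (xs (Fin.last t)) b := by
      rw [Fin.prod_univ_castSucc]
      simp [Fin.snoc_castSucc, Fin.snoc_last]
    have hT : (∏ k : Fin (t + 1), transProb Ploc
          ((Fin.snoc xs x' : Fin (t + 2) → Fin N → S) k.castSucc)
          ((Fin.snoc as₀ b : Fin (t + 1) → Fin N → U) k)
          ((Fin.snoc xs x' : Fin (t + 2) → Fin N → S) k.succ))
        = (∏ k : Fin t, transProb Ploc (xs k.castSucc) (as₀ k) (xs k.succ))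
            * transProb Ploc (xs (Fin.last t)) b x' := by
      rw [Fin.prod_univ_castSucc]
      congr 1
      · refine Finset.prod_congr rfl (fun k _ => ?_)
        rw [Fin.succ_castSucc]
        simp only [Fin.snoc_castSucc]
      · rw [Fin.succ_last]
        simp [Fin.snoc_castSucc, Fin.snoc_last]
    rw [hJ, hT, h0, if_congr hc rfl rfl]
    split_ifs with h
    · ring
    · rfl
  rw [Finset.sum_congr rfl
      (fun b _ => Finset.sum_congr rfl (fun x' _ => hb b x'))]
  by_cases h : ((∀ k : Fin (t + 1), ((xs k) i, empDist (xs k)) = ys k)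
      ∧ ∀ k : Fin t, (as₀ k) i = us k.castSucc)
  · rw [if_pos h]
    have hsplit : ∀ (b : Fin N → U) (x' : Fin N → S),
        (if (((∀ k : Fin (t + 1), ((xs k) i, empDist (xs k)) = ys k)
              ∧ ∀ k : Fin t, (as₀ k) i = us k.castSucc)
            ∧ (b i = us (Fin.last t) ∧ (x' i, empDist x') = w)) then
            (ν (xs 0) * (∏ k : Fin t, jointActProb i πi g (xs k.castSucc) (as₀ k))
              * ∏ k : Fin t, transProb Ploc (xs k.castSucc) (as₀ k) (xs k.succ))
            * (jointActProb i πi g (xs (Fin.last t)) b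
                * transProb Ploc (xs (Fin.last t)) b x')
          else 0)
        = (ν (xs 0) * (∏ k : Fin t, jointActProb i πi g (xs k.castSucc) (as₀ k))
            * ∏ k : Fin t, transProb Ploc (xs k.castSucc) (as₀ k) (xs k.succ))
          * (if (b i = us (Fin.last t) ∧ (x' i, empDist x') = w) then
              jointActProb i πi g (xs (Fin.last t)) b
                * transProb Ploc (xs (Fin.last t)) b x'
            else 0) := by
      intro b x'
      by_cases hb' : b i = us (Fin.last t) ∧ (x' i, empDist x') = w
      · rw [if_pos ⟨h, hb'⟩, if_pos hb']
      · rw [if_neg (fun hh => hb' hh.2), if_neg hb', mul_zero]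
    rw [Finset.sum_congr rfl
        (fun b _ => Finset.sum_congr rfl (fun x' _ => hsplit b x'))]
    rw [Finset.sum_congr rfl (fun b _ => (Finset.mul_sum _ _ _).symm), ← Finset.mul_sum,
      sum_step i πi g Ploc]
  · rw [if_neg h, zero_mul]
    apply Finset.sum_eq_zero
    intro b _
    apply Finset.sum_eq_zero
    intro x' _
    rw [if_neg (fun hh => h hh.1)]

set_option linter.unusedSectionVars false in
lemma hist_factor (g πi : S → (S → ℝ) → U → ℝ) (Ploc : S → (S → ℝ) → U → S → ℝ)
    (i : Fin N) (ν : (Fin N → S) → ℝ)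
    (hg : ∀ x μ, ∑ a : U, g x μ a = 1) (t : ℕ)
    (ys : Fin (t + 1) → S × (S → ℝ)) (us : Fin (t + 1) → U) (w : S × (S → ℝ)) :
    histNextProb ν πi g Ploc i t ys us w
      = stepKernel g Ploc i (ys (Fin.last t)) (us (Fin.last t)) w
          * histProb ν πi g Ploc i t ys us := by
  rw [histNextProb_eq g πi Ploc i ν t ys us w, histProb_eq g πi Ploc i ν hg t ys us,
    Finset.mul_sum]
  refine Finset.sum_congr rfl (fun xs _ => ?_)
  rw [Finset.mul_sum]
  refine Finset.sum_congr rfl (fun as₀ _ => ?_)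
  by_cases h : ((∀ k : Fin (t + 1), ((xs k) i, empDist (xs k)) = ys k)
      ∧ ∀ k : Fin t, (as₀ k) i = us k.castSucc)
  · rw [if_pos h]
    have hy : ((xs (Fin.last t)) i, empDist (xs (Fin.last t))) = ys (Fin.last t) :=
      h.1 (Fin.last t)
    rw [← hy, stepKernel_apply]
    ring
  · rw [if_neg h]
    simp

/-- Mean-field state observability yields a controlled Markov process for player `i`: when all
other players use the same stationary policy `g` on their observations `(x^j_t, μ_t)`, the
conditional law of the next observation `y^i_{t+1} = (x^i_{t+1}, μ_{t+1})` given the observable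
history depends only on the current `(y^i_t, u^i_t)`, and does not depend on player `i`'s own
stationary policy, on the initial distribution, on the time index, nor on the earlier history.
This is expressed in cross-multiplied form, valid also for null histories. -/
theorem mean_field_observation_is_controlled_markov
    (Ploc : S → (S → ℝ) → U → S → ℝ)
    (hPloc : ∀ x μ a, (∀ x', 0 ≤ Ploc x μ a x') ∧ ∑ x' : S, Ploc x μ a x' = 1)
    (g : S → (S → ℝ) → U → ℝ)
    (hg : ∀ x μ, (∀ a, 0 ≤ g x μ a) ∧ ∑ a : U, g x μ a = 1)
    (i : Fin N)
    (ν ν' : (Fin N → S) → ℝ)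
    (hν : (∀ s, 0 ≤ ν s) ∧ ∑ s : Fin N → S, ν s = 1)
    (hν' : (∀ s, 0 ≤ ν' s) ∧ ∑ s : Fin N → S, ν' s = 1)
    (πi πi' : S → (S → ℝ) → U → ℝ)
    (hπi : ∀ x μ, (∀ a, 0 ≤ πi x μ a) ∧ ∑ a : U, πi x μ a = 1)
    (hπi' : ∀ x μ, (∀ a, 0 ≤ πi' x μ a) ∧ ∑ a : U, πi' x μ a = 1)
    (t t' : ℕ)
    (ys : Fin (t + 1) → S × (S → ℝ)) (us : Fin (t + 1) → U)
    (ys' : Fin (t' + 1) → S × (S → ℝ)) (us' : Fin (t' + 1) → U)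
    (hy : ys (Fin.last t) = ys' (Fin.last t'))
    (hu : us (Fin.last t) = us' (Fin.last t'))
    (w : S × (S → ℝ)) :
    histNextProb ν πi g Ploc i t ys us w * histProb ν' πi' g Ploc i t' ys' us'
      = histNextProb ν' πi' g Ploc i t' ys' us' w * histProb ν πi g Ploc i t ys us := by
  rw [hist_factor g πi Ploc i ν (fun x μ => (hg x μ).2) t ys us w,
    hist_factor g πi' Ploc i ν' (fun x μ => (hg x μ).2) t' ys' us' w, hy, hu]
  ring

end
end

section
/- Tolerance-gap correctness: Let ε > 0, let V : Y → ℝ and W : Y × U → ℝ on finite sets Y, U, and define the gap set S = { |ε − (V(y) − min_a W(y,a))| : y ∈ Y } and d̄ = min(S \ {0}) (assume S \ {0} nonempty). Let d ∈ (0, d̄) and Ξ = (1/2)·min{d, d̄ − d}. If V̂ : Y → ℝ and Ŵ : Y × U → ℝ satisfy ‖V̂ − V‖_∞ < Ξ and ‖Ŵ − W‖_∞ < Ξ, then: [∀ y, V(y) ≤ min_a W(y,a) + ε] holds if and only if [∀ y, V̂(y) ≤ min_a Ŵ(y,a) + ε + d] holds. -/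
/-- Tolerance-gap correctness: if the tolerance `d` lies strictly between `0` and the minimum
nonzero separation `d̄` between `ε` and the suboptimality gaps `V(y) − min_a W(y,a)`, and the
estimates `V̂`, `Ŵ` are within `Ξ = (1/2)·min{d, d̄ − d}` of `V`, `W` in sup norm, then the
true ε-best-responding condition holds iff the estimated condition with slack `ε + d` holds. -/
theorem tolerance_gap_correctness
    {Y U : Type} [Fintype Y] [Fintype U] [Nonempty Y] [Nonempty U]
    (ε : ℝ) (hε : 0 < ε)
    (V : Y → ℝ) (W : Y → U → ℝ) (Vh : Y → ℝ) (Wh : Y → U → ℝ)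
    (Sgap : Finset ℝ)
    (hS : Sgap = Finset.image (fun y => |ε - (V y - ⨅ a : U, W y a)|) Finset.univ)
    (hne : (Sgap.erase 0).Nonempty)
    (dbar : ℝ) (hdbar : dbar = (Sgap.erase 0).min' hne)
    (d : ℝ) (hd : 0 < d ∧ d < dbar)
    (Ξ : ℝ) (hΞ : Ξ = min d (dbar - d) / 2)
    (hV : ∀ y, |Vh y - V y| < Ξ)
    (hW : ∀ y a, |Wh y a - W y a| < Ξ) :
    (∀ y, V y ≤ (⨅ a : U, W y a) + ε) ↔ (∀ y, Vh y ≤ (⨅ a : U, Wh y a) + ε + d) := by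
  obtain ⟨hd0, hdb⟩ := hd
  have hΞpos : 0 < Ξ := by
    rw [hΞ]
    have h1 : 0 < min d (dbar - d) := lt_min hd0 (by linarith)
    linarith
  have h2Ξd : 2 * Ξ ≤ d := by
    rw [hΞ]; have := min_le_left d (dbar - d); linarith
  have h2Ξdb : 2 * Ξ ≤ dbar - d := by
    rw [hΞ]; have := min_le_right d (dbar - d); linarith
  have hbddW : ∀ y, BddBelow (Set.range fun a => W y a) := fun y =>
    (Set.finite_range _).bddBelow
  have hbddWh : ∀ y, BddBelow (Set.range fun a => Wh y a) := fun y =>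
    (Set.finite_range _).bddBelow
  have hinf1 : ∀ y, (⨅ a : U, W y a) ≤ (⨅ a : U, Wh y a) + Ξ := by
    intro y
    have : (⨅ a : U, W y a) - Ξ ≤ ⨅ a : U, Wh y a := by
      apply le_ciInf
      intro a
      have h1 : (⨅ a : U, W y a) ≤ W y a := ciInf_le (hbddW y) a
      have h2 := abs_lt.mp (hW y a)
      linarith [h2.1, h2.2]
    linarith
  have hinf2 : ∀ y, (⨅ a : U, Wh y a) ≤ (⨅ a : U, W y a) + Ξ := by
    intro y
    have : (⨅ a : U, Wh y a) - Ξ ≤ ⨅ a : U, W y a := by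
      apply le_ciInf
      intro a
      have h1 : (⨅ a : U, Wh y a) ≤ Wh y a := ciInf_le (hbddWh y) a
      have h2 := abs_lt.mp (hW y a)
      linarith [h2.1, h2.2]
    linarith
  constructor
  · intro h y
    have h1 := h y
    have h2 := abs_lt.mp (hV y)
    have h3 := hinf1 y
    linarith [h2.1, h2.2]
  · intro h y
    have h1 := h y
    have h2 := abs_lt.mp (hV y)
    have h3 := hinf2 y
    -- V y < inf W + ε + d + 2Ξ ≤ inf W + ε + dbar
    have hlt : V y - (⨅ a : U, W y a) - ε < dbar := by
      linarith [h2.1, h2.2]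
    by_contra hcon
    push_neg at hcon
    have hmem : |ε - (V y - ⨅ a : U, W y a)| ∈ Sgap.erase 0 := by
      rw [hS]
      refine Finset.mem_erase.mpr ⟨?_, Finset.mem_image_of_mem _ (Finset.mem_univ y)⟩
      rw [abs_ne_zero]
      intro hz
      apply absurd hcon
      push_neg
      linarith
    have := Finset.min'_le _ _ hmem
    rw [← hdbar] at this
    have habs : |ε - (V y - ⨅ a : U, W y a)| = V y - (⨅ a : U, W y a) - ε := by
      rw [abs_of_nonpos (by linarith)]; ring
    linarith
end
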